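/- Let G be a network with request R and extended graph G_ext, and let f : E_ext → ℕ. Let W ⊆ V_G be such that f(δ⁺_{E_ext}(v)) = f(δ⁻_{E_ext}(v)) for all v ∈ W and f(δ⁺_{E_R}(W)) = 0. If u ∈ W and there exists an edge (a,u) ∈ E_ext with a ∉ W and f(a,u) ≥ 1, then there exists a directed path ⟨u, …, o⁻_S⟩ from u to the super sink o⁻_S in the support graph G^f_ext all of whose nodes except the last lie in W. -/

import Mathlib

/-! Formalization of the Constrained Virtual Steiner Arborescence Problem (CVSAP),
its single-commodity flow IP formulation, and related notions. -/

/-- Vertices of the extended graph: original vertices plus super source `src`,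
super sink `sinkS` for Steiner nodes and super sink `sinkR` for the root. -/
inductive ExtV (V : Type) where
  | orig : V → ExtV V
  | src : ExtV V
  | sinkS : ExtV V
  | sinkR : ExtV V
deriving DecidableEq

open ExtV

/-- A (finite) capacitated directed network. -/
structure Network (V : Type) [DecidableEq V] where
  E : Finset (V × V)
  uE : V × V → ℕ
  cE : V × V → ℝ

/-- A request `R = (root, S, T, u_r, c_S, u_S)`. -/
structure Request (V : Type) [DecidableEq V] where
  root : V
  S : Finset V
  T : Finset V
  ur : ℕ
  cS : V → ℝ
  uS : V → ℕ

variable {V : Type} [DecidableEq V]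

/-- Well-formedness: root is neither terminal nor Steiner site, Steiner sites and terminals
are disjoint, and all costs are positive. -/
def RequestWF (N : Network V) (R : Request V) : Prop :=
  R.root ∉ R.T ∧ R.root ∉ R.S ∧ Disjoint R.S R.T ∧
    (∀ s ∈ R.S, 0 < R.cS s) ∧ (∀ e ∈ N.E, 0 < N.cE e)

/-- Edge set of the extended graph `G_ext`. -/
def Eext (N : Network V) (R : Request V) : Finset (ExtV V × ExtV V) :=
  (N.E.image fun e => (orig e.1, orig e.2)) ∪
    ({(orig R.root, sinkR)} : Finset (ExtV V × ExtV V)) ∪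
    (R.S.image fun s => (orig s, sinkS)) ∪
    (R.S.image fun s => (src, orig s)) ∪
    (R.T.image fun t => (src, orig t))

/-- `E_R`: the extended edges without the edges into the Steiner super sink. -/
def ERext (N : Network V) (R : Request V) : Finset (ExtV V × ExtV V) :=
  (Eext N R).filter fun e => e.2 ≠ sinkS

/-- Edges of `F` leaving node `v`. -/
def outV (F : Finset (ExtV V × ExtV V)) (v : ExtV V) : Finset (ExtV V × ExtV V) :=
  F.filter fun e => e.1 = v

/-- Edges of `F` entering node `v`. -/
def inV (F : Finset (ExtV V × ExtV V)) (v : ExtV V) : Finset (ExtV V × ExtV V) :=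
  F.filter fun e => e.2 = v

/-- Edges of `F` leaving the node set `W`. -/
def outSet (F : Finset (ExtV V × ExtV V)) (W : Finset (ExtV V)) : Finset (ExtV V × ExtV V) :=
  F.filter fun e => e.1 ∈ W ∧ e.2 ∉ W

/-- Total flow of `f` on the edge set `F`. -/
def fSum (f : ExtV V × ExtV V → ℕ) (F : Finset (ExtV V × ExtV V)) : ℕ :=
  ∑ e ∈ F, f e

/-- Embedding of a set of original nodes into the extended graph. -/
def extW (W : Finset V) : Finset (ExtV V) := W.image orig

/-- A walk in the support graph `G^f_ext`: consecutive nodes are joined by extended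
edges carrying positive flow. -/
def IsSupportWalk (N : Network V) (R : Request V) (f : ExtV V × ExtV V → ℕ)
    (p : List (ExtV V)) : Prop :=
  p.Chain' fun a b => (a, b) ∈ Eext N R ∧ 1 ≤ f (a, b)

/-- (IP-1): flow conservation at all original nodes. -/
def IP1 (N : Network V) (R : Request V) (f : ExtV V × ExtV V → ℕ) : Prop :=
  ∀ v : V, fSum f (outV (Eext N R) (orig v)) = fSum f (inV (Eext N R) (orig v))

/-- (IP-2): connectivity inequalities for activated Steiner sites. -/
def IP2 (N : Network V) (R : Request V) (x : V → ℕ) (f : ExtV V × ExtV V → ℕ) : Prop :=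
  ∀ W : Finset V, ∀ s ∈ W, s ∈ R.S → x s ≤ fSum f (outSet (ERext N R) (extW W))

/-- (IP-3): directed Steiner cuts for terminals. -/
def IP3 (N : Network V) (R : Request V) (f : ExtV V × ExtV V → ℕ) : Prop :=
  ∀ W : Finset V, (W ∩ R.T).Nonempty → 1 ≤ fSum f (outSet (ERext N R) (extW W))

/-- Feasibility for the integer program IP-A-CVSAP. -/
def IPFeasible (N : Network V) (R : Request V) (x : V → ℕ) (f : ExtV V × ExtV V → ℕ) : Prop :=
  (∀ s ∈ R.S, x s ≤ 1) ∧
  IP1 N R f ∧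
  IP2 N R x f ∧
  IP3 N R f ∧
  (∀ s ∈ R.S, x s ≤ f (orig s, sinkS)) ∧
  (∀ s ∈ R.S, f (orig s, sinkS) ≤ R.uS s * x s) ∧
  f (orig R.root, sinkR) ≤ R.ur ∧
  (∀ e ∈ N.E, f (orig e.1, orig e.2) ≤ N.uE e) ∧
  (∀ t ∈ R.T, f (src, orig t) = 1) ∧
  (∀ s ∈ R.S, f (src, orig s) = x s)

/-- Objective value of IP-A-CVSAP. -/
noncomputable def costIP (N : Network V) (R : Request V) (x : V → ℕ)
    (f : ExtV V × ExtV V → ℕ) : ℝ :=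
  ∑ e ∈ N.E, N.cE e * f (orig e.1, orig e.2) + ∑ s ∈ R.S, R.cS s * x s

/-- A Virtual Arborescence: nodes, virtual edges and the mapping of virtual edges
onto paths in the underlying graph. -/
structure VirtArb (V : Type) where
  VT : Finset V
  ET : Finset (V × V)
  pi : V × V → List V

/-- `p` is a simple directed path in `N` from `u` to `v`. -/
def IsPathInG (N : Network V) (p : List V) (u v : V) : Prop :=
  p.Chain' (fun a b => (a, b) ∈ N.E) ∧ p.head? = some u ∧ p.getLast? = some v ∧ p.Nodup

/-- The virtual edges whose path uses the edge `e` of the underlying graph. -/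
def pathUses (TA : VirtArb V) (e : V × V) : Finset (V × V) :=
  TA.ET.filter fun d => e ∈ (TA.pi d).zip (TA.pi d).tail

/-- `|π(E_T)[e]|`: the number of paths of the virtual arborescence using edge `e`. -/
def pathCount (TA : VirtArb V) (e : V × V) : ℕ := (pathUses TA e).card

/-- Total degree of node `v` with respect to the virtual edge set `ET`. -/
def degTotal (ET : Finset (V × V)) (v : V) : ℕ :=
  (ET.filter fun e => e.1 = v).card + (ET.filter fun e => e.2 = v).card

/-- `(VT, ET, r)` is an arborescence rooted at `r` with all edges oriented towards `r`. -/
def ArborTowards (VT : Finset V) (ET : Finset (V × V)) (r : V) : Prop :=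
  (∀ e ∈ ET, e.1 ∈ VT ∧ e.2 ∈ VT ∧ e.1 ≠ e.2) ∧
  (∀ v ∈ VT, v ≠ r → (ET.filter fun e => e.1 = v).card = 1) ∧
  (∀ e ∈ ET, e.1 ≠ r) ∧
  (∀ v ∈ VT, ∃ p : List V, p.Chain' (fun a b => (a, b) ∈ ET) ∧
      p.head? = some v ∧ p.getLast? = some r)

/-- `(VT, ET, r)` is an arborescence rooted at `r` with all edges oriented away from `r`. -/
def ArborAway (VT : Finset V) (ET : Finset (V × V)) (r : V) : Prop :=
  (∀ e ∈ ET, e.1 ∈ VT ∧ e.2 ∈ VT ∧ e.1 ≠ e.2) ∧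
  (∀ v ∈ VT, v ≠ r → (ET.filter fun e => e.2 = v).card = 1) ∧
  (∀ e ∈ ET, e.2 ≠ r) ∧
  (∀ v ∈ VT, ∃ p : List V, p.Chain' (fun a b => (a, b) ∈ ET) ∧
      p.head? = some r ∧ p.getLast? = some v)

/-- Feasible solutions of A-CVSAP: all arborescence edges oriented towards the root. -/
def FeasibleACVSAP (N : Network V) (R : Request V) (TA : VirtArb V) : Prop :=
  R.root ∈ TA.VT ∧
  ArborTowards TA.VT TA.ET R.root ∧
  (∀ d ∈ TA.ET, IsPathInG N (TA.pi d) d.1 d.2) ∧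
  R.T ⊆ TA.VT ∧
  TA.VT ⊆ insert R.root (R.S ∪ R.T) ∧
  (∀ t ∈ R.T, degTotal TA.ET t = 1) ∧
  degTotal TA.ET R.root ≤ R.ur ∧
  (∀ s ∈ R.S, s ∈ TA.VT → degTotal TA.ET s ≤ R.uS s + 1) ∧
  (∀ e ∈ N.E, pathCount TA e ≤ N.uE e)

/-- Feasible solutions of M-CVSAP: all arborescence edges oriented away from the root. -/
def FeasibleMCVSAP (N : Network V) (R : Request V) (TA : VirtArb V) : Prop :=
  R.root ∈ TA.VT ∧
  ArborAway TA.VT TA.ET R.root ∧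
  (∀ d ∈ TA.ET, IsPathInG N (TA.pi d) d.1 d.2) ∧
  R.T ⊆ TA.VT ∧
  TA.VT ⊆ insert R.root (R.S ∪ R.T) ∧
  (∀ t ∈ R.T, degTotal TA.ET t = 1) ∧
  degTotal TA.ET R.root ≤ R.ur ∧
  (∀ s ∈ R.S, s ∈ TA.VT → degTotal TA.ET s ≤ R.uS s + 1) ∧
  (∀ e ∈ N.E, pathCount TA e ≤ N.uE e)

/-- Cost of a virtual arborescence. -/
noncomputable def costCVSAP (N : Network V) (R : Request V) (TA : VirtArb V) : ℝ :=
  ∑ e ∈ N.E, N.cE e * pathCount TA e + ∑ s ∈ R.S.filter (· ∈ TA.VT), R.cS s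

/-! ### Statement 6: a node of a flow-closed set receiving flow from outside has a
flow-carrying path to the Steiner super sink staying inside the set. -/


lemma chain'_dropLast_rel {α : Type*} {r : α → α → Prop} :
    ∀ {l : List α}, l.Chain' r → ∀ z ∈ l.dropLast, ∃ y, r z y := by
  intro l
  induction l with
  | nil => simp
  | cons x t ih =>
    cases t with
    | nil => simp
    | cons y t' =>
      intro h z hz
      simp only [List.Chain', List.isChain_cons_cons] at h
      rw [List.dropLast_cons₂, List.mem_cons] at hz
      rcases hz with rfl | hz
      · exact ⟨y, h.1⟩
      · exact ih h.2 z hz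

lemma exists_nodup_chain'' {α : Type*} [DecidableEq α] (r : α → α → Prop) :
    ∀ (n : ℕ) (l : List α), l.length ≤ n → l.Chain' r → l ≠ [] →
    ∃ m : List α, m.Chain' r ∧ m.Nodup ∧ m.head? = l.head? ∧ m.getLast? = l.getLast? ∧
      ∀ z ∈ m, z ∈ l := by
  intro n
  induction n with
  | zero =>
    intro l hl _ hne
    rw [Nat.le_zero, List.length_eq_zero_iff] at hl
    exact absurd hl hne
  | succ n ih =>
    rintro (_ | ⟨x, rest⟩) hlen hch hne
    · exact absurd rfl hne
    by_cases hx : x ∈ rest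
    · set rest' := rest.dropWhile (fun y => decide (y ≠ x)) with hrest'
      have hsuf : rest' <:+ rest := List.dropWhile_suffix _
      have hne' : rest' ≠ [] := by
        intro h0
        rw [hrest', List.dropWhile_eq_nil_iff] at h0
        simpa using h0 x hx
      have hhead : rest'.head hne' = x := by
        have h3 := List.head_dropWhile_not (fun y => decide (y ≠ x)) hne'
        have h4 := of_decide_eq_false h3
        exact not_not.mp h4
      have hch' : rest'.Chain' r := hch.tail.suffix hsuf
      have hlen' : rest'.length ≤ n := by
        have := hsuf.length_le
        simp only [List.length_cons] at hlen
        omega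
      obtain ⟨m, hm, hnd, hh, hgl, hmem⟩ := ih rest' hlen' hch' hne'
      obtain ⟨s, hs⟩ := hsuf
      refine ⟨m, hm, hnd, ?_, ?_, ?_⟩
      · rw [hh, List.head?_eq_head hne', hhead, List.head?_cons]
      · rw [hgl]
        have h1 : rest.getLast? = rest'.getLast? := by
          rw [← hs, List.getLast?_append, List.getLast?_eq_getLast hne']
          rfl
        have h2 : (x :: rest).getLast? = rest.getLast? := by
          rcases List.exists_cons_of_ne_nil (l := rest) (by rintro rfl; simpa using hx) with ⟨b, t, rfl⟩
          simp [List.getLast?_cons_cons]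
        rw [h2, h1]
      · intro z hz
        refine List.mem_cons_of_mem _ ?_
        rw [← hs]
        exact List.mem_append_right _ (hmem z hz)
    · rcases eq_or_ne rest [] with rfl | hrne
      · exact ⟨[x], List.isChain_singleton _, by simp, rfl, rfl, by simp⟩
      obtain ⟨m, hm, hnd, hh, hgl, hmem⟩ := ih rest (by simp only [List.length_cons] at hlen; omega) hch.tail hrne
      have hmne : m ≠ [] := by
        intro h0
        rw [h0] at hgl
        exact hrne (List.getLast?_eq_none_iff.mp hgl.symm)
      refine ⟨x :: m, ?_, ?_, rfl, ?_, ?_⟩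
      · simp only [List.Chain', List.isChain_cons]
        refine ⟨fun y hy => ?_, hm⟩
        have := (List.isChain_cons.mp hch).1
        apply this
        rw [← hh]; exact hy
      · exact List.nodup_cons.mpr ⟨fun hxm => hx (hmem x hxm), hnd⟩
      · have h3 : (x :: m).getLast? = m.getLast? := by
          rcases List.exists_cons_of_ne_nil hmne with ⟨b, t, rfl⟩
          simp [List.getLast?_cons_cons]
        have h2 : (x :: rest).getLast? = rest.getLast? := by
          rcases List.exists_cons_of_ne_nil hrne with ⟨b, t, rfl⟩
          simp [List.getLast?_cons_cons]
        rw [h3, hgl, h2]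
      · intro z hz
        rcases List.mem_cons.mp hz with rfl | hz
        · exact List.mem_cons_self
        · exact List.mem_cons_of_mem _ (hmem z hz)
theorem exists_path_to_steiner_sink [Fintype V] (N : Network V) (R : Request V)
    (hWF : RequestWF N R) (f : ExtV V × ExtV V → ℕ) (W : Finset V)
    (hcons : ∀ v ∈ W, fSum f (outV (Eext N R) (ExtV.orig v)) =
      fSum f (inV (Eext N R) (ExtV.orig v)))
    (hcut : fSum f (outSet (ERext N R) (extW W)) = 0)
    (u : V) (hu : u ∈ W) (a : ExtV V) (ha : (a, ExtV.orig u) ∈ Eext N R)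
    (haW : a ∉ extW W) (haf : 1 ≤ f (a, ExtV.orig u)) :
    ∃ p : List (ExtV V),
      IsSupportWalk N R f p ∧ p.Nodup ∧
      p.head? = some (ExtV.orig u) ∧ p.getLast? = some ExtV.sinkS ∧
      ∀ z ∈ p.dropLast, z ∈ extW W := by
  classical
  -- the "one-step flow inside W" relation
  set step : ExtV V → ExtV V → Prop :=
    fun x y => x ∈ extW W ∧ (x, y) ∈ Eext N R ∧ 1 ≤ f (x, y) with hstep
  -- Main claim: the Steiner sink is reachable from `orig u` via `step`.
  have key : Relation.ReflTransGen step (ExtV.orig u) ExtV.sinkS := by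
    by_contra hns
    set Rs : Finset V :=
      W.filter (fun w => Relation.ReflTransGen step (ExtV.orig u) (ExtV.orig w)) with hRsdef
    have hRsW : Rs ⊆ W := Finset.filter_subset _ _
    have hAW : extW Rs ⊆ extW W := Finset.image_subset_image hRsW
    have huRs : u ∈ Rs := Finset.mem_filter.mpr ⟨hu, Relation.ReflTransGen.refl⟩
    set OutF : Finset (ExtV V × ExtV V) :=
      (Eext N R).filter (fun e => e.1 ∈ extW Rs) with hOutF
    set InF : Finset (ExtV V × ExtV V) :=
      (Eext N R).filter (fun e => e.2 ∈ extW Rs) with hInF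
    set BothF : Finset (ExtV V × ExtV V) :=
      (Eext N R).filter (fun e => e.1 ∈ extW Rs ∧ e.2 ∈ extW Rs) with hBothF
    -- out- and in-flow of the reachable set, summed vertexwise
    have hOut : fSum f OutF = ∑ w ∈ Rs, fSum f (outV (Eext N R) (ExtV.orig w)) := by
      have hEq : OutF = Rs.biUnion (fun w => outV (Eext N R) (ExtV.orig w)) := by
        ext e
        simp only [hOutF, Finset.mem_filter, Finset.mem_biUnion, outV, extW, Finset.mem_image]
        constructor
        · rintro ⟨he, w, hw, hwe⟩; exact ⟨w, hw, he, hwe.symm⟩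
        · rintro ⟨w, hw, he, hwe⟩; exact ⟨he, w, hw, hwe.symm⟩
      rw [hEq, fSum, Finset.sum_biUnion]
      · rfl
      · intro w _ w' _ hne
        refine Finset.disjoint_left.mpr fun e he he' => hne ?_
        have h1 := (Finset.mem_filter.mp he).2
        have h2 := (Finset.mem_filter.mp he').2
        have : ExtV.orig w = ExtV.orig w' := by rw [← h1, ← h2]
        exact ExtV.orig.inj this
    have hIn : fSum f InF = ∑ w ∈ Rs, fSum f (inV (Eext N R) (ExtV.orig w)) := by
      have hEq : InF = Rs.biUnion (fun w => inV (Eext N R) (ExtV.orig w)) := by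
        ext e
        simp only [hInF, Finset.mem_filter, Finset.mem_biUnion, inV, extW, Finset.mem_image]
        constructor
        · rintro ⟨he, w, hw, hwe⟩; exact ⟨w, hw, he, hwe.symm⟩
        · rintro ⟨w, hw, he, hwe⟩; exact ⟨he, w, hw, hwe.symm⟩
      rw [hEq, fSum, Finset.sum_biUnion]
      · rfl
      · intro w _ w' _ hne
        refine Finset.disjoint_left.mpr fun e he he' => hne ?_
        have h1 := (Finset.mem_filter.mp he).2
        have h2 := (Finset.mem_filter.mp he').2
        have : ExtV.orig w = ExtV.orig w' := by rw [← h1, ← h2]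
        exact ExtV.orig.inj this
    have hsum : fSum f OutF = fSum f InF := by
      rw [hOut, hIn]
      exact Finset.sum_congr rfl fun w hw => hcons w (hRsW hw)
    -- every flow-carrying edge leaving the reachable set would extend reachability
    have hOutBoth : fSum f OutF = fSum f BothF := by
      have hsplit : BothF = OutF.filter (fun e => e.2 ∈ extW Rs) := by
        rw [hBothF, hOutF, Finset.filter_filter]
      have : fSum f OutF =
          fSum f (OutF.filter (fun e => e.2 ∈ extW Rs)) +
          fSum f (OutF.filter (fun e => ¬ e.2 ∈ extW Rs)) :=
        (Finset.sum_filter_add_sum_filter_not _ _ _).symm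
      have hzero : fSum f (OutF.filter (fun e => ¬ e.2 ∈ extW Rs)) = 0 := by
        refine Finset.sum_eq_zero fun e he => ?_
        rw [Finset.mem_filter, hOutF, Finset.mem_filter] at he
        obtain ⟨⟨heE, he1⟩, he2⟩ := he
        by_contra hf0
        have hfe : 1 ≤ f e := Nat.one_le_iff_ne_zero.mpr hf0
        obtain ⟨w, hwRs, hwe⟩ := Finset.mem_image.mp he1
        have hwW : w ∈ W := (Finset.mem_filter.mp hwRs).1
        have hreachw : Relation.ReflTransGen step (ExtV.orig u) (ExtV.orig w) :=
          (Finset.mem_filter.mp hwRs).2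
        have hstepw : step (ExtV.orig w) e.2 := by
          refine ⟨Finset.mem_image.mpr ⟨w, hwW, rfl⟩, ?_, ?_⟩
          · rw [hwe]; simpa using heE
          · rw [hwe]; simpa using hfe
        have hreach2 : Relation.ReflTransGen step (ExtV.orig u) e.2 := hreachw.tail hstepw
        rcases eq_or_ne e.2 ExtV.sinkS with h2S | h2S
        · exact hns (h2S ▸ hreach2)
        by_cases h2W : e.2 ∈ extW W
        · obtain ⟨w', hw'W, hw'e⟩ := Finset.mem_image.mp h2W
          apply he2
          refine Finset.mem_image.mpr ⟨w', Finset.mem_filter.mpr ⟨hw'W, ?_⟩, hw'e⟩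
          rw [hw'e]; exact hreach2
        · have hmem : e ∈ outSet (ERext N R) (extW W) := by
            refine Finset.mem_filter.mpr ⟨Finset.mem_filter.mpr ⟨heE, h2S⟩, hAW he1, h2W⟩
          have := (Finset.sum_eq_zero_iff.mp hcut) e hmem
          exact hf0 this
      rw [this, hsplit, hzero]
      omega
    -- the incoming flow strictly exceeds the internal flow
    have hBothIn : BothF ⊆ InF := by
      intro e he
      rw [hBothF, Finset.mem_filter] at he
      exact Finset.mem_filter.mpr ⟨he.1, he.2.2⟩
    have hauIn : (a, ExtV.orig u) ∈ InF := by
      refine Finset.mem_filter.mpr ⟨ha, ?_⟩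
      exact Finset.mem_image.mpr ⟨u, huRs, rfl⟩
    have hauBoth : (a, ExtV.orig u) ∉ BothF := by
      intro h
      exact haW (hAW (Finset.mem_filter.mp h).2.1)
    have hInGe : fSum f BothF + f (a, ExtV.orig u) ≤ fSum f InF := by
      have h1 : fSum f (insert (a, ExtV.orig u) BothF) =
          f (a, ExtV.orig u) + fSum f BothF := Finset.sum_insert hauBoth
      have h2 : insert (a, ExtV.orig u) BothF ⊆ InF :=
        Finset.insert_subset hauIn hBothIn
      have h3 : fSum f (insert (a, ExtV.orig u) BothF) ≤ fSum f InF :=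
        Finset.sum_le_sum_of_subset h2
      omega
    omega
  -- extract a flow-carrying walk, then prune it to a simple path
  obtain ⟨l, hl, hlast⟩ := List.exists_isChain_cons_of_relationReflTransGen key
  have hchain : (ExtV.orig u :: l).Chain' step := hl
  obtain ⟨m, hm, hnd, hh, hgl, -⟩ :=
    exists_nodup_chain'' step (ExtV.orig u :: l).length (ExtV.orig u :: l) le_rfl hchain
      (List.cons_ne_nil _ _)
  refine ⟨m, hm.imp fun x y h => ⟨h.2.1, h.2.2⟩, hnd, ?_, ?_, ?_⟩
  · rw [hh, List.head?_cons]
  · rw [hgl, List.getLast?_eq_getLast (List.cons_ne_nil _ _), hlast]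
  · intro z hz
    obtain ⟨y, hy⟩ := chain'_dropLast_rel hm z hz
    exact hy.1
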